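/- Let n ≥ 2, let a, b : Fin n → ℝ with b_i ≠ 0 for all i, let μ ∈ ℂ, and let J(a,b) be the n-node ring Jacobian, regarded as a complex matrix. Suppose u : Fin n → ℂ is nonzero and satisfies J(a,b)·u = μ·u. Then: (1) u_j ≠ 0 for every j; (2) u_{j+1} = ((μ − a_j)/b_j)·u_j for every j, with the index j+1 taken modulo n; and (3) ∏_{i} (μ − a_i) = ∏_{i} b_i. -/

import Mathlib

open Polynomial

/-- The n-node ring Jacobian: diagonal entries `a i`, entries `b i` in position
`(i, i+1 mod n)`, all other entries zero. -/
def ringJacobianN (n : ℕ) (a b : Fin n → ℝ) : Matrix (Fin n) (Fin n) ℝ :=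
  Matrix.of fun i j =>
    if (j : ℕ) = (i : ℕ) then a i
    else if (j : ℕ) = ((i : ℕ) + 1) % n then b i else 0

theorem eigenvector_structure_ringJacobianN (n : ℕ) (hn : 2 ≤ n)
    (a b : Fin n → ℝ) (hb : ∀ i, b i ≠ 0) (μ : ℂ) (u : Fin n → ℂ)
    (hu : u ≠ 0)
    (heig : ((ringJacobianN n a b).map Complex.ofReal).mulVec u = μ • u) :
    (∀ j, u j ≠ 0) ∧
    (∀ j : Fin n,
      u ⟨((j : ℕ) + 1) % n, Nat.mod_lt _ (by omega)⟩ = ((μ - a j) / b j) * u j) ∧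
    (∏ i, (μ - a i)) = ∏ i, (b i : ℂ) := by
  have hn0 : 0 < n := by omega
  haveI : NeZero n := ⟨by omega⟩
  have hone : (1 : Fin n).val = 1 := by
    simp [Fin.val_one', Nat.mod_eq_of_lt (by omega : 1 < n)]
  have hadd : ∀ j : Fin n, ((j + 1 : Fin n) : ℕ) = ((j : ℕ) + 1) % n := by
    intro j; simp [Fin.add_def, hone]
  have hnext : ∀ j : Fin n,
      (⟨((j : ℕ) + 1) % n, Nat.mod_lt _ hn0⟩ : Fin n) = j + 1 := by
    intro j; apply Fin.ext; simp [hadd]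
  have hneq : ∀ j : Fin n, j + 1 ≠ j := by
    intro j h
    have := congrArg Fin.val h
    rw [hadd] at this
    rcases Nat.lt_or_ge ((j : ℕ) + 1) n with h'|h'
    · rw [Nat.mod_eq_of_lt h'] at this; omega
    · have hj := j.isLt
      have hjn : (j : ℕ) + 1 = n := by omega
      rw [hjn, Nat.mod_self] at this; omega
  have hrec : ∀ j : Fin n, (b j : ℂ) * u (j + 1) = (μ - a j) * u j := by
    intro j
    have h := congrFun heig j
    rw [Matrix.mulVec, dotProduct] at h
    have hterm : ∀ k : Fin n, ((ringJacobianN n a b).map Complex.ofReal) j k * u k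
        = (if j = k then (a j : ℂ) * u k else 0)
          + (if j + 1 = k then (b j : ℂ) * u k else 0) := by
      intro k
      simp only [Matrix.map_apply, ringJacobianN, Matrix.of_apply]
      have h1 : ((k : ℕ) = (j : ℕ)) ↔ j = k := by
        rw [eq_comm, Fin.ext_iff]
      have h2 : ((k : ℕ) = ((j : ℕ) + 1) % n) ↔ j + 1 = k := by
        rw [eq_comm, Fin.ext_iff, hadd]
      simp only [apply_ite Complex.ofReal, h1, h2, Complex.ofReal_zero]
      split_ifs with c1 c2
      · exact absurd (c2.trans c1.symm) (hneq j)
      · ring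
      · ring
      · ring
    rw [Finset.sum_congr rfl (fun k _ => hterm k), Finset.sum_add_distrib,
      Finset.sum_ite_eq, Finset.sum_ite_eq] at h
    simp only [Finset.mem_univ, if_true, Pi.smul_apply, smul_eq_mul] at h
    linear_combination h
  have hstep : ∀ j : Fin n, u (j + 1) = ((μ - a j) / b j) * u j := by
    intro j
    have hb' : (b j : ℂ) ≠ 0 := Complex.ofReal_ne_zero.mpr (hb j)
    field_simp
    linear_combination hrec j
  have hzero : ∀ j, u j ≠ 0 := by
    by_contra h
    push_neg at h
    obtain ⟨j, hj⟩ := h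
    letI := Fin.instCommRing n
    have hall : ∀ m : ℕ, u (j + (m : Fin n)) = 0 := by
      intro m
      induction m with
      | zero => simpa using hj
      | succ m ih =>
        have hc : (((m + 1 : ℕ)) : Fin n) = (m : Fin n) + 1 := by push_cast; ring
        rw [hc, ← add_assoc, hstep (j + (m : Fin n)), ih, mul_zero]
    apply hu
    funext k
    have h := hall ((k - j).val)
    rwa [Fin.cast_val_eq_self, show j + (k - j) = k by ring] at h
  have h1 : ∏ i, ((b i : ℂ) * u (i + 1)) = ∏ i, ((μ - a i) * u i) :=
    Finset.prod_congr rfl (fun i _ => hrec i)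
  rw [Finset.prod_mul_distrib, Finset.prod_mul_distrib] at h1
  have h2 : ∏ i : Fin n, u (i + 1) = ∏ i, u i :=
    Fintype.prod_equiv (Equiv.addRight 1) _ _ (fun i => by simp)
  rw [h2] at h1
  have hune : (∏ i, u i) ≠ 0 := Finset.prod_ne_zero_iff.mpr (fun i _ => hzero i)
  exact ⟨hzero, fun j => by rw [hnext j]; exact hstep j,
    (mul_right_cancel₀ hune h1).symm⟩
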